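/- Suppose λ ∈ ρ + C (λ lies in the shifted Weyl chamber) and μ ∈ E. Then ‖λ − μ‖² ≥ (1/2)·Σ_{α ∈ Δ⁺, (α,μ)=0} (λ,α). -/

import Mathlib

open scoped RealInnerProductSpace
open Finset

namespace MagicalAux

variable {E : Type*} [NormedAddCommGroup E] [InnerProductSpace ℝ E]

lemma inner_self_pos' {α : E} (hα : α ≠ 0) : 0 < ⟪α, α⟫ :=
  real_inner_self_nonneg.lt_of_ne fun h => hα (inner_self_eq_zero.1 h.symm)

noncomputable def rf (α β : E) : E := β - (2 * ⟪β, α⟫ / ⟪α, α⟫) • α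

lemma inner_rf_left (α β x : E) :
    ⟪rf α β, x⟫ = ⟪β, x⟫ - (2 * ⟪β, α⟫ / ⟪α, α⟫) * ⟪α, x⟫ := by
  simp [rf, inner_sub_left, real_inner_smul_left]

lemma inner_rf_self (α β : E) (hα : α ≠ 0) : ⟪rf α β, α⟫ = -⟪β, α⟫ := by
  have h : ⟪α, α⟫ ≠ 0 := ne_of_gt (inner_self_pos' hα)
  rw [inner_rf_left]
  field_simp
  ring

lemma rf_rf (α β : E) (hα : α ≠ 0) : rf α (rf α β) = β := by
  have h : ⟪α, α⟫ ≠ 0 := ne_of_gt (inner_self_pos' hα)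
  have h2 : ⟪rf α β, α⟫ = -⟪β, α⟫ := inner_rf_self α β hα
  show rf α β - (2 * ⟪rf α β, α⟫ / ⟪α, α⟫) • α = β
  rw [h2, rf]
  match_scalars <;> field_simp
  ring

lemma rf_neg (α β : E) : rf α (-β) = -(rf α β) := by
  simp only [rf, inner_neg_left]
  module


section RS

variable (Δ : Finset E) (v : E)

lemma rf_mem (hΔrefl : ∀ α ∈ Δ, ∀ β ∈ Δ, β - (2 * ⟪β, α⟫ / ⟪α, α⟫) • α ∈ Δ)
    {α β : E} (hα : α ∈ Δ) (hβ : β ∈ Δ) : rf α β ∈ Δ := hΔrefl α hα β hβ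

lemma neg_mem' (hΔ0 : (0 : E) ∉ Δ)
    (hΔrefl : ∀ α ∈ Δ, ∀ β ∈ Δ, β - (2 * ⟪β, α⟫ / ⟪α, α⟫) • α ∈ Δ)
    {α : E} (hα : α ∈ Δ) : -α ∈ Δ := by
  have hα0 : α ≠ 0 := fun h => hΔ0 (h ▸ hα)
  have h : ⟪α, α⟫ ≠ 0 := ne_of_gt (inner_self_pos' hα0)
  have h2 : rf α α = -α := by
    rw [rf]
    have : 2 * ⟪α, α⟫ / ⟪α, α⟫ = 2 := by field_simp
    rw [this]
    module
  exact h2 ▸ rf_mem Δ hΔrefl hα hα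

/-- Strict Cauchy-Schwarz for non-proportional roots. -/
lemma cs_strict (hΔ0 : (0 : E) ∉ Δ)
    (hΔred : ∀ α ∈ Δ, ∀ t : ℝ, t • α ∈ Δ → t = 1 ∨ t = -1)
    {α β : E} (hα : α ∈ Δ) (hβ : β ∈ Δ) (h1 : β ≠ α) (h2 : β ≠ -α) :
    ⟪β, α⟫ * ⟪β, α⟫ < ⟪α, α⟫ * ⟪β, β⟫ := by
  have hα0 : α ≠ 0 := fun h => hΔ0 (h ▸ hα)
  have haa : 0 < ⟪α, α⟫ := inner_self_pos' hα0
  set w : E := ⟪α, α⟫ • β - ⟪β, α⟫ • α with hw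
  have hw0 : w ≠ 0 := by
    intro h
    have hβeq : β = (⟪β, α⟫ / ⟪α, α⟫) • α := by
      have h' : ⟪α, α⟫ • β = ⟪β, α⟫ • α := sub_eq_zero.1 h
      have h'' := congrArg (fun x : E => (⟪α, α⟫)⁻¹ • x) h'
      simp only [smul_smul, inv_mul_cancel₀ haa.ne', one_smul] at h''
      rw [div_eq_inv_mul]; exact h''
    have := hΔred α hα (⟪β, α⟫ / ⟪α, α⟫) (hβeq ▸ hβ)
    rcases this with h' | h'
    · exact h1 (by rw [hβeq, h', one_smul])
    · exact h2 (by rw [hβeq, h', neg_one_smul])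
  have hww : 0 < ⟪w, w⟫ := inner_self_pos' hw0
  have hexp : ⟪w, w⟫ = ⟪α, α⟫ * (⟪α, α⟫ * ⟪β, β⟫ - ⟪β, α⟫ * ⟪β, α⟫) := by
    simp only [hw, inner_sub_left, inner_sub_right, real_inner_smul_left,
      real_inner_smul_right, real_inner_comm α β]
    ring
  nlinarith

lemma sub_mem (hΔ0 : (0 : E) ∉ Δ)
    (hΔred : ∀ α ∈ Δ, ∀ t : ℝ, t • α ∈ Δ → t = 1 ∨ t = -1)
    (hΔrefl : ∀ α ∈ Δ, ∀ β ∈ Δ, β - (2 * ⟪β, α⟫ / ⟪α, α⟫) • α ∈ Δ)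
    (hΔcrys : ∀ α ∈ Δ, ∀ β ∈ Δ, ∃ n : ℤ, 2 * ⟪β, α⟫ / ⟪α, α⟫ = (n : ℝ))
    {α β : E} (hα : α ∈ Δ) (hβ : β ∈ Δ) (h1 : β ≠ α) (h2 : β ≠ -α)
    (hpos : 0 < ⟪β, α⟫) : β - α ∈ Δ := by
  have hα0 : α ≠ 0 := fun h => hΔ0 (h ▸ hα)
  have hβ0 : β ≠ 0 := fun h => hΔ0 (h ▸ hβ)
  have haa : 0 < ⟪α, α⟫ := inner_self_pos' hα0
  have hbb : 0 < ⟪β, β⟫ := inner_self_pos' hβ0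
  obtain ⟨n, hn⟩ := hΔcrys α hα β hβ
  obtain ⟨m, hm⟩ := hΔcrys β hβ α hα
  have hn1 : 1 ≤ n := by
    have : (0 : ℝ) < (n : ℝ) := by
      rw [← hn]; positivity
    have h0 : 0 < n := by exact_mod_cast this
    omega
  have hm1 : 1 ≤ m := by
    have : (0 : ℝ) < (m : ℝ) := by
      rw [← hm]
      have : 0 < ⟪α, β⟫ := by rwa [real_inner_comm]
      positivity
    have h0 : 0 < m := by exact_mod_cast this
    omega
  have hcs : ⟪β, α⟫ * ⟪β, α⟫ < ⟪α, α⟫ * ⟪β, β⟫ := cs_strict Δ hΔ0 hΔred hα hβ h1 h2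
  have hnm : (n : ℝ) * (m : ℝ) < 4 := by
    have hab : ⟪α, β⟫ = ⟪β, α⟫ := real_inner_comm β α
    rw [← hn, ← hm, hab, div_mul_div_comm, div_lt_iff₀ (by positivity)]
    nlinarith
  have hnm' : n * m < 4 := by exact_mod_cast hnm
  have hcase : n = 1 ∨ m = 1 := by
    by_contra hc
    push_neg at hc
    have : 2 ≤ n := by omega
    have : 2 ≤ m := by omega
    nlinarith
  rcases hcase with h | h
  · have := rf_mem Δ hΔrefl hα hβ
    rw [rf, hn, h] at this
    simpa using this
  · have := rf_mem Δ hΔrefl hβ hα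
    rw [rf, hm, h] at this
    simp only [Int.cast_one, one_smul] at this
    have := neg_mem' Δ hΔ0 hΔrefl this
    rwa [neg_sub] at this


lemma neg_pos_mem (hΔ0 : (0 : E) ∉ Δ)
    (hΔrefl : ∀ α ∈ Δ, ∀ β ∈ Δ, β - (2 * ⟪β, α⟫ / ⟪α, α⟫) • α ∈ Δ)
    (hv : ∀ α ∈ Δ, ⟪α, v⟫ ≠ 0) {δ : E} (hδ : δ ∈ Δ)
    (h : δ ∉ Δ.filter (fun x => 0 < ⟪x, v⟫)) :
    -δ ∈ Δ.filter (fun x => 0 < ⟪x, v⟫) := by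
  have hne := hv δ hδ
  have hnp : ¬ 0 < ⟪δ, v⟫ := fun hp => h (mem_filter.2 ⟨hδ, hp⟩)
  refine mem_filter.2 ⟨neg_mem' Δ hΔ0 hΔrefl hδ, ?_⟩
  rw [inner_neg_left]
  rcases lt_or_gt_of_ne hne with h' | h'
  · linarith
  · exact absurd h' hnp

lemma pair_mul_lt_four (hΔ0 : (0 : E) ∉ Δ)
    (hΔred : ∀ α ∈ Δ, ∀ t : ℝ, t • α ∈ Δ → t = 1 ∨ t = -1)
    {α β : E} (hα : α ∈ Δ) (hβ : β ∈ Δ) (h1 : β ≠ α) (h2 : β ≠ -α)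
    {n m : ℤ} (hn : 2 * ⟪β, α⟫ / ⟪α, α⟫ = (n : ℝ)) (hm : 2 * ⟪α, β⟫ / ⟪β, β⟫ = (m : ℝ)) :
    n * m < 4 := by
  have hα0 : α ≠ 0 := fun h => hΔ0 (h ▸ hα)
  have hβ0 : β ≠ 0 := fun h => hΔ0 (h ▸ hβ)
  have haa : 0 < ⟪α, α⟫ := inner_self_pos' hα0
  have hbb : 0 < ⟪β, β⟫ := inner_self_pos' hβ0
  have hcs : ⟪β, α⟫ * ⟪β, α⟫ < ⟪α, α⟫ * ⟪β, β⟫ := cs_strict Δ hΔ0 hΔred hα hβ h1 h2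
  have hnm : (n : ℝ) * (m : ℝ) < 4 := by
    have hab : ⟪α, β⟫ = ⟪β, α⟫ := real_inner_comm β α
    rw [← hn, ← hm, hab, div_mul_div_comm, div_lt_iff₀ (by positivity)]
    nlinarith
  exact_mod_cast hnm

/-- If `α` is simple, the reflection `s_α` maps positive roots other than `α`
to positive roots. -/
lemma simple_perm (hΔ0 : (0 : E) ∉ Δ)
    (hΔred : ∀ α ∈ Δ, ∀ t : ℝ, t • α ∈ Δ → t = 1 ∨ t = -1)
    (hΔrefl : ∀ α ∈ Δ, ∀ β ∈ Δ, β - (2 * ⟪β, α⟫ / ⟪α, α⟫) • α ∈ Δ)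
    (hΔcrys : ∀ α ∈ Δ, ∀ β ∈ Δ, ∃ n : ℤ, 2 * ⟪β, α⟫ / ⟪α, α⟫ = (n : ℝ))
    (hv : ∀ α ∈ Δ, ⟪α, v⟫ ≠ 0)
    {α : E} (hαP : α ∈ Δ.filter (fun δ => 0 < ⟪δ, v⟫))
    (hsimp : ∀ β ∈ Δ.filter (fun δ => 0 < ⟪δ, v⟫),
      ∀ γ ∈ Δ.filter (fun δ => 0 < ⟪δ, v⟫), α ≠ β + γ)
    {β : E} (hβP : β ∈ Δ.filter (fun δ => 0 < ⟪δ, v⟫)) (hβα : β ≠ α) :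
    rf α β ∈ Δ.filter (fun δ => 0 < ⟪δ, v⟫) := by
  classical
  obtain ⟨hαΔ, hαv⟩ := mem_filter.1 hαP
  obtain ⟨hβΔ, hβv⟩ := mem_filter.1 hβP
  have hα0 : α ≠ 0 := fun h => hΔ0 (h ▸ hαΔ)
  have haa : 0 < ⟪α, α⟫ := inner_self_pos' hα0
  have hβnα : β ≠ -α := by
    intro h; rw [h, inner_neg_left] at hβv; linarith
  have hrfΔ : rf α β ∈ Δ := rf_mem Δ hΔrefl hαΔ hβΔ
  by_cases hba : ⟪β, α⟫ ≤ 0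
  · refine mem_filter.2 ⟨hrfΔ, ?_⟩
    rw [inner_rf_left]
    have hc : 2 * ⟪β, α⟫ / ⟪α, α⟫ ≤ 0 :=
      div_nonpos_iff.2 (Or.inr ⟨by linarith, haa.le⟩)
    nlinarith [mul_nonneg (neg_nonneg.2 hc) hαv.le]
  push_neg at hba
  by_contra hnot
  have hγP : -(rf α β) ∈ Δ.filter (fun x => 0 < ⟪x, v⟫) :=
    neg_pos_mem Δ v hΔ0 hΔrefl hv hrfΔ hnot
  set γ := -(rf α β) with hγdef
  obtain ⟨hγΔ, hγv⟩ := mem_filter.1 hγP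
  obtain ⟨n, hn⟩ := hΔcrys α hαΔ β hβΔ
  have h2ba : 2 * ⟪β, α⟫ = (n : ℝ) * ⟪α, α⟫ := by
    rw [div_eq_iff haa.ne'] at hn; exact hn
  have hn1 : 1 ≤ n := by
    have : (0 : ℝ) < (n : ℝ) := by nlinarith
    have h0 : 0 < n := by exact_mod_cast this
    omega
  have hγeq : γ = (n : ℝ) • α - β := by
    rw [hγdef, rf, hn, neg_sub]
  have hβeq' : β = (n : ℝ) • α - γ := by rw [hγeq]; abel
  have hsum_nα : β + γ = (n : ℝ) • α := by rw [hγeq]; abel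
  by_cases hone : n = 1
  · refine hsimp β hβP γ hγP ?_
    rw [hsum_nα, hone]
    simp
  have hn2 : 2 ≤ n := by omega
  have hn2R : (2 : ℝ) ≤ (n : ℝ) := by exact_mod_cast hn2
  obtain ⟨m, hm⟩ := hΔcrys β hβΔ α hαΔ
  have hm1 : 1 ≤ m := by
    have : (0 : ℝ) < (m : ℝ) := by
      rw [← hm]
      have hab : 0 < ⟪α, β⟫ := by rwa [real_inner_comm]
      have hbb : 0 < ⟪β, β⟫ := inner_self_pos' (fun h => hΔ0 (h ▸ hβΔ))
      exact div_pos (by linarith) hbb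
    have h0 : 0 < m := by exact_mod_cast this
    omega
  have hnm : n * m < 4 := pair_mul_lt_four Δ hΔ0 hΔred hαΔ hβΔ hβα hβnα hn hm
  have hm_eq : m = 1 := by nlinarith
  have hδΔ : α - β ∈ Δ := by
    have h' := rf_mem Δ hΔrefl hβΔ hαΔ
    rw [rf, hm, hm_eq] at h'
    simpa using h'
  by_cases hδP : α - β ∈ Δ.filter (fun x => 0 < ⟪x, v⟫)
  · exact hsimp β hβP (α - β) hδP (by abel)
  have hAP : β - α ∈ Δ.filter (fun x => 0 < ⟪x, v⟫) := by
    have h' := neg_pos_mem Δ v hΔ0 hΔrefl hv hδΔ hδP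
    rwa [neg_sub] at h'
  -- the γ side
  have hγa : ⟪γ, α⟫ = (n : ℝ) / 2 * ⟪α, α⟫ := by
    rw [hγeq, inner_sub_left, real_inner_smul_left]
    linarith
  have hγa_pos : 0 < ⟪γ, α⟫ := by
    rw [hγa]; nlinarith
  have hγnea : γ ≠ α := by
    intro h
    have hb : β = ((n : ℝ) - 1) • α := by
      rw [hβeq', h, sub_smul, one_smul]
    rcases hΔred α hαΔ ((n : ℝ) - 1) (by rw [← hb]; exact hβΔ) with h' | h'
    · exact hβα (by rw [hb, h', one_smul])
    · have hn0 : (n : ℝ) = 0 := by linarith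
      have : n = 0 := by exact_mod_cast hn0
      omega
  have hγnena : γ ≠ -α := by
    intro h
    have hb : β = ((n : ℝ) + 1) • α := by
      rw [hβeq', h, sub_neg_eq_add, add_smul, one_smul]
    rcases hΔred α hαΔ ((n : ℝ) + 1) (by rw [← hb]; exact hβΔ) with h' | h'
    · have hn0 : (n : ℝ) = 0 := by linarith
      have : n = 0 := by exact_mod_cast hn0
      omega
    · have hn0 : (n : ℝ) = -2 := by linarith
      have : n = -2 := by exact_mod_cast hn0
      omega
  have hγn : 2 * ⟪γ, α⟫ / ⟪α, α⟫ = (n : ℝ) := by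
    rw [hγa]; field_simp
  obtain ⟨k, hk⟩ := hΔcrys γ hγΔ α hαΔ
  have hk1 : 1 ≤ k := by
    have : (0 : ℝ) < (k : ℝ) := by
      rw [← hk]
      have hag : 0 < ⟪α, γ⟫ := by rwa [real_inner_comm]
      have hgg : 0 < ⟪γ, γ⟫ := inner_self_pos' (fun h => hΔ0 (h ▸ hγΔ))
      exact div_pos (by linarith) hgg
    have h0 : 0 < k := by exact_mod_cast this
    omega
  have hnk : n * k < 4 := pair_mul_lt_four Δ hΔ0 hΔred hαΔ hγΔ hγnea hγnena hγn hk
  have hk_eq : k = 1 := by nlinarith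
  have hεΔ : α - γ ∈ Δ := by
    have h' := rf_mem Δ hΔrefl hγΔ hαΔ
    rw [rf, hk, hk_eq] at h'
    simpa using h'
  by_cases hεP : α - γ ∈ Δ.filter (fun x => 0 < ⟪x, v⟫)
  · exact hsimp γ hγP (α - γ) hεP (by abel)
  have hBP : γ - α ∈ Δ.filter (fun x => 0 < ⟪x, v⟫) := by
    have h' := neg_pos_mem Δ v hΔ0 hΔrefl hv hεΔ hεP
    rwa [neg_sub] at h'
  have hn3 : n ≤ 3 := by nlinarith
  have hAv : 0 < ⟪β - α, v⟫ := (mem_filter.1 hAP).2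
  have hBv : 0 < ⟪γ - α, v⟫ := (mem_filter.1 hBP).2
  interval_cases n
  · -- n = 2 : (β - α) + (γ - α) = 0, contradiction with positivity
    have h0 : (β - α) + (γ - α) = 0 := by
      have h2 : β + γ = ((2 : ℤ) : ℝ) • α := hsum_nα
      have h2' : β + γ = α + α := by
        rw [h2]; push_cast; rw [two_smul]
      rw [sub_add_sub_comm, h2', sub_self]
    have := congrArg (fun x : E => ⟪x, v⟫) h0
    simp only [inner_add_left, inner_zero_left] at this
    linarith
  · -- n = 3 : α = (β - α) + (γ - α)
    refine hsimp (β - α) hAP (γ - α) hBP ?_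
    have h3 : β + γ = ((3 : ℤ) : ℝ) • α := hsum_nα
    have h3' : β + γ = α + α + α := by
      rw [h3]; push_cast
      rw [show (3 : ℝ) = 2 + 1 by norm_num, add_smul, two_smul, one_smul]
    rw [sub_add_sub_comm, h3']
    abel


/-- For a simple positive root, `⟪ρ, α⟫ = ⟪α,α⟫/2`. -/
lemma rho_simple (hΔ0 : (0 : E) ∉ Δ)
    (hΔred : ∀ α ∈ Δ, ∀ t : ℝ, t • α ∈ Δ → t = 1 ∨ t = -1)
    (hΔrefl : ∀ α ∈ Δ, ∀ β ∈ Δ, β - (2 * ⟪β, α⟫ / ⟪α, α⟫) • α ∈ Δ)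
    (hΔcrys : ∀ α ∈ Δ, ∀ β ∈ Δ, ∃ n : ℤ, 2 * ⟪β, α⟫ / ⟪α, α⟫ = (n : ℝ))
    (hv : ∀ α ∈ Δ, ⟪α, v⟫ ≠ 0)
    {α : E} (hαP : α ∈ Δ.filter (fun δ => 0 < ⟪δ, v⟫))
    (hsimp : ∀ β ∈ Δ.filter (fun δ => 0 < ⟪δ, v⟫),
      ∀ γ ∈ Δ.filter (fun δ => 0 < ⟪δ, v⟫), α ≠ β + γ) :
    ⟪(2 : ℝ)⁻¹ • ∑ β ∈ Δ.filter (fun δ => 0 < ⟪δ, v⟫), β, α⟫ = ⟪α, α⟫ / 2 := by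
  classical
  obtain ⟨hαΔ, hαv⟩ := mem_filter.1 hαP
  have hα0 : α ≠ 0 := fun h => hΔ0 (h ▸ hαΔ)
  have haa : 0 < ⟪α, α⟫ := inner_self_pos' hα0
  set P := Δ.filter (fun δ => 0 < ⟪δ, v⟫) with hPdef
  have hsplit : ∑ β ∈ P, ⟪β, α⟫ = ⟪α, α⟫ + ∑ β ∈ P.erase α, ⟪β, α⟫ :=
    (Finset.add_sum_erase P (fun β => ⟪β, α⟫) hαP).symm
  have hzero : ∑ β ∈ P.erase α, ⟪β, α⟫ = 0 := by
    refine Finset.sum_involution (fun β _ => rf α β) ?_ ?_ ?_ ?_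
    · intro β hβ
      rw [inner_rf_self α β hα0]
      ring
    · intro β hβ hne h
      apply hne
      rw [rf, sub_eq_self] at h
      rcases smul_eq_zero.1 h with h' | h'
      · rw [div_eq_zero_iff] at h'
        rcases h' with h' | h'
        · linarith
        · exact absurd h' haa.ne'
      · exact absurd h' hα0
    · intro β hβ
      obtain ⟨hβne, hβP⟩ := Finset.mem_erase.1 hβ
      refine Finset.mem_erase.2 ⟨?_, simple_perm Δ v hΔ0 hΔred hΔrefl hΔcrys hv hαP hsimp hβP hβne⟩
      intro h
      have : β = -α := by
        have := congrArg (rf α) h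
        rwa [rf_rf α β hα0, show rf α α = -α from ?_] at this
        · rw [rf]
          have h2 : 2 * ⟪α, α⟫ / ⟪α, α⟫ = 2 := by field_simp
          rw [h2]; module
      rw [this] at hβP
      have := (mem_filter.1 hβP).2
      rw [inner_neg_left] at this
      linarith
    · intro β hβ
      exact rf_rf α β hα0
  rw [real_inner_smul_left, sum_inner, hsplit, hzero]
  ring


/-- Induction principle for positive roots: every positive root is either simple or
a sum of two positive roots. -/
lemma pos_induction (pred : E → Prop)
    (hsimple : ∀ α ∈ Δ.filter (fun δ => 0 < ⟪δ, v⟫),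
      (∀ β ∈ Δ.filter (fun δ => 0 < ⟪δ, v⟫), ∀ γ ∈ Δ.filter (fun δ => 0 < ⟪δ, v⟫), α ≠ β + γ) →
      pred α)
    (hsum : ∀ α ∈ Δ.filter (fun δ => 0 < ⟪δ, v⟫), ∀ β ∈ Δ.filter (fun δ => 0 < ⟪δ, v⟫),
      ∀ γ ∈ Δ.filter (fun δ => 0 < ⟪δ, v⟫), α = β + γ → pred β → pred γ → pred α) :
    ∀ α ∈ Δ.filter (fun δ => 0 < ⟪δ, v⟫), pred α := by
  classical
  set P := Δ.filter (fun δ => 0 < ⟪δ, v⟫) with hPdef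
  suffices h : ∀ N : ℕ, ∀ α ∈ P, (P.filter (fun δ => ⟪δ, v⟫ < ⟪α, v⟫)).card ≤ N → pred α by
    intro α hα
    exact h _ α hα le_rfl
  intro N
  induction N with
  | zero =>
    intro α hα hcard
    refine hsimple α hα ?_
    intro β hβ γ hγ heq
    have hγv : 0 < ⟪γ, v⟫ := (mem_filter.1 hγ).2
    have hβlt : ⟪β, v⟫ < ⟪α, v⟫ := by
      rw [heq, inner_add_left]; linarith
    have : β ∈ P.filter (fun δ => ⟪δ, v⟫ < ⟪α, v⟫) := mem_filter.2 ⟨hβ, hβlt⟩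
    have := Finset.card_pos.2 ⟨β, this⟩
    omega
  | succ N ih =>
    intro α hα hcard
    by_cases hS : ∀ β ∈ P, ∀ γ ∈ P, α ≠ β + γ
    · exact hsimple α hα hS
    push_neg at hS
    obtain ⟨β, hβ, γ, hγ, heq⟩ := hS
    have hβv : 0 < ⟪β, v⟫ := (mem_filter.1 hβ).2
    have hγv : 0 < ⟪γ, v⟫ := (mem_filter.1 hγ).2
    have hβlt : ⟪β, v⟫ < ⟪α, v⟫ := by rw [heq, inner_add_left]; linarith
    have hγlt : ⟪γ, v⟫ < ⟪α, v⟫ := by rw [heq, inner_add_left]; linarith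
    have hkey : ∀ δ ∈ P, ⟪δ, v⟫ < ⟪α, v⟫ →
        (P.filter (fun x => ⟪x, v⟫ < ⟪δ, v⟫)).card ≤ N := by
      intro δ hδ hδlt
      have hss : P.filter (fun x => ⟪x, v⟫ < ⟪δ, v⟫) ⊂ P.filter (fun x => ⟪x, v⟫ < ⟪α, v⟫) := by
        refine Finset.ssubset_iff_of_subset ?_ |>.2 ⟨δ, mem_filter.2 ⟨hδ, hδlt⟩, ?_⟩
        · intro x hx
          obtain ⟨hx1, hx2⟩ := mem_filter.1 hx
          exact mem_filter.2 ⟨hx1, by linarith⟩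
        · intro hx
          exact absurd (mem_filter.1 hx).2 (lt_irrefl _)
      have := Finset.card_lt_card hss
      omega
    exact hsum α hα β hβ γ hγ heq (ih β hβ (hkey β hβ hβlt)) (ih γ hγ (hkey γ hγ hγlt))

/-- Positivity: `⟪ρ, α⟫ > 0` for every positive root. -/
lemma rho_pos (hΔ0 : (0 : E) ∉ Δ)
    (hΔred : ∀ α ∈ Δ, ∀ t : ℝ, t • α ∈ Δ → t = 1 ∨ t = -1)
    (hΔrefl : ∀ α ∈ Δ, ∀ β ∈ Δ, β - (2 * ⟪β, α⟫ / ⟪α, α⟫) • α ∈ Δ)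
    (hΔcrys : ∀ α ∈ Δ, ∀ β ∈ Δ, ∃ n : ℤ, 2 * ⟪β, α⟫ / ⟪α, α⟫ = (n : ℝ))
    (hv : ∀ α ∈ Δ, ⟪α, v⟫ ≠ 0) :
    ∀ α ∈ Δ.filter (fun δ => 0 < ⟪δ, v⟫),
      0 < ⟪(2 : ℝ)⁻¹ • ∑ β ∈ Δ.filter (fun δ => 0 < ⟪δ, v⟫), β, α⟫ := by
  refine pos_induction Δ v _ ?_ ?_
  · intro α hα hsimp
    rw [rho_simple Δ v hΔ0 hΔred hΔrefl hΔcrys hv hα hsimp]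
    have hα0 : α ≠ 0 := fun h => hΔ0 (h ▸ (mem_filter.1 hα).1)
    have := inner_self_pos' hα0
    linarith
  · intro α hα β hβ γ hγ heq hb hg
    rw [heq, inner_add_right]
    linarith

/-- The key integrality lemma: `⟪ρ, α⟫ ≥ ⟪α,α⟫/2` for every positive root. -/
lemma rho_ge (hΔ0 : (0 : E) ∉ Δ)
    (hΔred : ∀ α ∈ Δ, ∀ t : ℝ, t • α ∈ Δ → t = 1 ∨ t = -1)
    (hΔrefl : ∀ α ∈ Δ, ∀ β ∈ Δ, β - (2 * ⟪β, α⟫ / ⟪α, α⟫) • α ∈ Δ)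
    (hΔcrys : ∀ α ∈ Δ, ∀ β ∈ Δ, ∃ n : ℤ, 2 * ⟪β, α⟫ / ⟪α, α⟫ = (n : ℝ))
    (hv : ∀ α ∈ Δ, ⟪α, v⟫ ≠ 0)
    {α : E} (hαP : α ∈ Δ.filter (fun δ => 0 < ⟪δ, v⟫)) :
    ⟪α, α⟫ / 2 ≤ ⟪(2 : ℝ)⁻¹ • ∑ β ∈ Δ.filter (fun δ => 0 < ⟪δ, v⟫), β, α⟫ := by
  classical
  set P := Δ.filter (fun δ => 0 < ⟪δ, v⟫) with hPdef
  obtain ⟨hαΔ, hαv⟩ := mem_filter.1 hαP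
  have hα0 : α ≠ 0 := fun h => hΔ0 (h ▸ hαΔ)
  have haa : 0 < ⟪α, α⟫ := inner_self_pos' hα0
  -- integer pairing function
  set nf : E → ℤ := fun β => if h : β ∈ Δ then (hΔcrys α hαΔ β h).choose else 0 with hnf
  have hnf_spec : ∀ β ∈ Δ, 2 * ⟪β, α⟫ / ⟪α, α⟫ = ((nf β : ℤ) : ℝ) := by
    intro β hβ
    rw [hnf]
    simp only [dif_pos hβ]
    exact (hΔcrys α hαΔ β hβ).choose_spec
  have hnf_real : ∀ β ∈ Δ, 2 * ⟪β, α⟫ = ((nf β : ℤ) : ℝ) * ⟪α, α⟫ := by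
    intro β hβ
    rw [← hnf_spec β hβ]
    field_simp
  have hnf_rf : ∀ β ∈ Δ, nf (rf α β) = -(nf β) := by
    intro β hβ
    have h1 := hnf_real β hβ
    have h2 := hnf_real (rf α β) (rf_mem Δ hΔrefl hαΔ hβ)
    rw [inner_rf_self α β hα0] at h2
    have : ((nf (rf α β) : ℤ) : ℝ) = ((-(nf β) : ℤ) : ℝ) := by
      push_cast
      nlinarith
    exact_mod_cast this
  have hnf_neg : ∀ β ∈ Δ, nf (-β) = -(nf β) := by
    intro β hβ
    have h1 := hnf_real β hβ
    have h2 := hnf_real (-β) (neg_mem' Δ hΔ0 hΔrefl hβ)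
    rw [inner_neg_left] at h2
    have : ((nf (-β) : ℤ) : ℝ) = ((-(nf β) : ℤ) : ℝ) := by
      push_cast
      nlinarith
    exact_mod_cast this
  have hnfα : nf α = 2 := by
    have h1 := hnf_real α hαΔ
    have : ((nf α : ℤ) : ℝ) = ((2 : ℤ) : ℝ) := by
      push_cast
      nlinarith
    exact_mod_cast this
  -- the total sum
  set N : ℤ := ∑ β ∈ P, nf β with hN
  have hNreal : ((N : ℤ) : ℝ) * ⟪α, α⟫ = 4 * ⟪(2 : ℝ)⁻¹ • ∑ β ∈ P, β, α⟫ := by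
    rw [real_inner_smul_left, sum_inner, hN]
    push_cast
    rw [Finset.sum_mul]
    rw [← Finset.sum_congr rfl (fun β hβ => (hnf_real β (mem_filter.1 hβ).1))]
    rw [← Finset.mul_sum]
    ring
  -- parity of N
  have hsplitN : N = 2 + ∑ β ∈ P.erase α, nf β := by
    rw [hN, ← Finset.add_sum_erase P nf hαP, hnfα]
  have hnegnotinP : ∀ β ∈ P, -β ∉ P := by
    intro β hβ hcon
    have h1 := (mem_filter.1 hβ).2
    have h2 := (mem_filter.1 hcon).2
    rw [inner_neg_left] at h2
    linarith
  have hpar : (((∑ β ∈ P.erase α, nf β : ℤ)) : ZMod 2) = 0 := by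
    push_cast
    have hxx : ∀ x : ZMod 2, x + x = 0 := by decide
    refine Finset.sum_involution
      (fun β _ => if rf α β ∈ P then rf α β else -(rf α β)) ?_ ?_ ?_ ?_
    · -- f a + f (g a) = 0
      intro β hβ
      obtain ⟨hβne, hβP⟩ := Finset.mem_erase.1 hβ
      have hβΔ : β ∈ Δ := (mem_filter.1 hβP).1
      have hrfΔ : rf α β ∈ Δ := rf_mem Δ hΔrefl hαΔ hβΔ
      by_cases hc : rf α β ∈ P
      · rw [if_pos hc, hnf_rf β hβΔ]
        push_cast
        ring
      · rw [if_neg hc, hnf_neg _ hrfΔ, hnf_rf β hβΔ, neg_neg]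
        exact hxx _
    · -- f a ≠ 0 → g a ≠ a
      intro β hβ hne h
      obtain ⟨hβne, hβP⟩ := Finset.mem_erase.1 hβ
      have hβΔ : β ∈ Δ := (mem_filter.1 hβP).1
      have hβv : 0 < ⟪β, v⟫ := (mem_filter.1 hβP).2
      by_cases hc : rf α β ∈ P
      · rw [if_pos hc] at h
        -- rf α β = β forces ⟪β, α⟫ = 0
        rw [rf, sub_eq_self] at h
        rcases smul_eq_zero.1 h with h' | h'
        · rw [div_eq_zero_iff] at h'
          rcases h' with h' | h'
          · have : 2 * ⟪β, α⟫ = 0 := by linarith [h']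
            have hβα0 : ⟪β, α⟫ = 0 := by linarith
            have : ((nf β : ℤ) : ℝ) = 0 := by
              rw [← hnf_spec β hβΔ, hβα0]
              simp
            have hnf0 : nf β = 0 := by exact_mod_cast this
            exact hne (by rw [hnf0]; simp)
          · exact absurd h' haa.ne'
        · exact absurd h' hα0
      · rw [if_neg hc] at h
        -- -(rf α β) = β forces β = ±α, contradiction
        have hrfeq : rf α β = -β := by rw [← neg_eq_iff_eq_neg.2 h.symm]  -- fix below
        have heq2 : (2 : ℝ) • β = ((nf β : ℤ) : ℝ) • α := by
          have h' : β - ((nf β : ℤ) : ℝ) • α = -β := by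
            rw [← hnf_spec β hβΔ, ← rf]; exact hrfeq
          rw [two_smul]
          nth_rewrite 1 [sub_eq_iff_eq_add.1 h']
          abel
        have h3 : β = (((nf β : ℤ) : ℝ) / 2) • α := by
          have h4 := congrArg (fun x : E => (2 : ℝ)⁻¹ • x) heq2
          simp only [smul_smul] at h4
          norm_num at h4
          exact h4.trans
            (by rw [show (1 : ℝ) / 2 * ((nf β : ℤ) : ℝ) = ((nf β : ℤ) : ℝ) / 2 from by ring])
        rcases hΔred α hαΔ _ ((h3 ▸ hβΔ)) with h' | h'
        · exact hβne (by rw [h3, h', one_smul])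
        · have : β = -α := by rw [h3, h', neg_one_smul]
          rw [this, inner_neg_left] at hβv
          linarith
    · -- g maps into the set
      intro β hβ
      obtain ⟨hβne, hβP⟩ := Finset.mem_erase.1 hβ
      have hβΔ : β ∈ Δ := (mem_filter.1 hβP).1
      have hβv : 0 < ⟪β, v⟫ := (mem_filter.1 hβP).2
      have hrfΔ : rf α β ∈ Δ := rf_mem Δ hΔrefl hαΔ hβΔ
      have hrfαα : rf α α = -α := by
        rw [rf]
        have h2 : 2 * ⟪α, α⟫ / ⟪α, α⟫ = 2 := by field_simp
        rw [h2]; module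
      by_cases hc : rf α β ∈ P
      · rw [if_pos hc]
        refine Finset.mem_erase.2 ⟨?_, hc⟩
        intro hcon
        have : β = -α := by
          have := congrArg (rf α) hcon
          rwa [rf_rf α β hα0, hrfαα] at this
        rw [this, inner_neg_left] at hβv
        linarith
      · rw [if_neg hc]
        refine Finset.mem_erase.2 ⟨?_, neg_pos_mem Δ v hΔ0 hΔrefl hv hrfΔ hc⟩
        intro hcon
        have hrfeq : rf α β = -α := by rw [← neg_neg (rf α β), hcon]
        have : β = α := by
          have := congrArg (rf α) hrfeq
          rwa [rf_rf α β hα0, rf_neg, hrfαα, neg_neg] at this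
        exact hβne this
    · -- involution
      intro β hβ
      obtain ⟨hβne, hβP⟩ := Finset.mem_erase.1 hβ
      have hβΔ : β ∈ Δ := (mem_filter.1 hβP).1
      by_cases hc : rf α β ∈ P
      · rw [if_pos hc, if_pos (by rw [rf_rf α β hα0]; exact hβP)]
        exact rf_rf α β hα0
      · rw [if_neg hc]
        have hkey : rf α (-(rf α β)) = -β := by
          rw [rf_neg, rf_rf α β hα0]
        rw [if_neg (by rw [hkey]; exact hnegnotinP β hβP)]
        rw [hkey, neg_neg]
  obtain ⟨k, hk⟩ := (ZMod.intCast_zmod_eq_zero_iff_dvd _ 2).1 hpar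
  have hN2 : N = 2 + 2 * k := by rw [hsplitN, hk]; norm_num
  have hpos := rho_pos Δ v hΔ0 hΔred hΔrefl hΔcrys hv α hαP
  have hNpos : 0 < N := by
    by_contra hcon
    push_neg at hcon
    have hcon' : ((N : ℤ) : ℝ) ≤ 0 := by exact_mod_cast hcon
    nlinarith [hNreal, hpos, haa, mul_nonpos_of_nonpos_of_nonneg hcon' haa.le]
  have hNge2 : 2 ≤ N := by omega
  have hNge2' : (2 : ℝ) ≤ ((N : ℤ) : ℝ) := by exact_mod_cast hNge2
  nlinarith [hNreal, haa, mul_le_mul_of_nonneg_right hNge2' haa.le]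

end RS
end MagicalAux

open MagicalAux

theorem magical_inequality_first
    {E : Type*} [NormedAddCommGroup E] [InnerProductSpace ℝ E] [FiniteDimensional ℝ E]
    (Δ : Finset E)
    (hΔ0 : (0 : E) ∉ Δ)
    (hΔred : ∀ α ∈ Δ, ∀ t : ℝ, t • α ∈ Δ → t = 1 ∨ t = -1)
    (hΔrefl : ∀ α ∈ Δ, ∀ β ∈ Δ, β - (2 * ⟪β, α⟫ / ⟪α, α⟫) • α ∈ Δ)
    (hΔcrys : ∀ α ∈ Δ, ∀ β ∈ Δ, ∃ n : ℤ, 2 * ⟪β, α⟫ / ⟪α, α⟫ = (n : ℝ))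
    (v : E) (hv : ∀ α ∈ Δ, ⟪α, v⟫ ≠ 0)
    (Δpos : Finset E) (hΔpos : Δpos = Δ.filter (fun α => 0 < ⟪α, v⟫))
    (ρ : E) (hρ : ρ = (2 : ℝ)⁻¹ • ∑ α ∈ Δpos, α)    (lam μ : E)
    (hlam : ∀ α ∈ Δpos, 0 ≤ ⟪lam - ρ, α⟫) :
    ‖lam - μ‖ ^ 2 ≥ (2 : ℝ)⁻¹ * ∑ α ∈ Δpos.filter (fun α => ⟪α, μ⟫ = 0), ⟪lam, α⟫ := by
  classical
  subst hΔpos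
  -- the stabilizer subsystem of μ
  set Δμ : Finset E := Δ.filter (fun β => ⟪β, μ⟫ = 0) with hΔμ
  have hΔμ0 : (0 : E) ∉ Δμ := fun h => hΔ0 (mem_filter.1 h).1
  have hΔμred : ∀ α ∈ Δμ, ∀ t : ℝ, t • α ∈ Δμ → t = 1 ∨ t = -1 :=
    fun α hα t ht => hΔred α (mem_filter.1 hα).1 t (mem_filter.1 ht).1
  have hΔμrefl : ∀ α ∈ Δμ, ∀ β ∈ Δμ, β - (2 * ⟪β, α⟫ / ⟪α, α⟫) • α ∈ Δμ := by
    intro α hα β hβ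
    obtain ⟨hαΔ, hαμ⟩ := mem_filter.1 hα
    obtain ⟨hβΔ, hβμ⟩ := mem_filter.1 hβ
    refine mem_filter.2 ⟨hΔrefl α hαΔ β hβΔ, ?_⟩
    simp only [inner_sub_left, real_inner_smul_left]
    rw [hαμ, hβμ]
    ring
  have hΔμcrys : ∀ α ∈ Δμ, ∀ β ∈ Δμ, ∃ n : ℤ, 2 * ⟪β, α⟫ / ⟪α, α⟫ = (n : ℝ) :=
    fun α hα β hβ => hΔcrys α (mem_filter.1 hα).1 β (mem_filter.1 hβ).1
  have hvμ : ∀ α ∈ Δμ, ⟪α, v⟫ ≠ 0 := fun α hα => hv α (mem_filter.1 hα).1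
  -- the positive part of the subsystem
  have hSeq : Δμ.filter (fun δ => 0 < ⟪δ, v⟫)
      = (Δ.filter (fun α => 0 < ⟪α, v⟫)).filter (fun α => ⟪α, μ⟫ = 0) := by
    ext x
    simp only [hΔμ, mem_filter]
    tauto
  set S : Finset E := Δμ.filter (fun δ => 0 < ⟪δ, v⟫) with hS
  set ρS : E := (2 : ℝ)⁻¹ • ∑ β ∈ S, β with hρS
  have hSsub : ∀ δ ∈ S, δ ∈ Δ.filter (fun α => 0 < ⟪α, v⟫) := by
    intro δ hδ
    obtain ⟨hδμ, hδv⟩ := mem_filter.1 hδ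
    exact mem_filter.2 ⟨(mem_filter.1 hδμ).1, hδv⟩
  have hinner_ρS : ∀ x : E, ⟪x, ρS⟫ = (2 : ℝ)⁻¹ * ∑ δ ∈ S, ⟪x, δ⟫ := by
    intro x
    rw [hρS, real_inner_smul_right, inner_sum]
  -- Step 1 : ⟪ρS, δ⟫ ≤ ⟪ρ, δ⟫ for all δ ∈ S
  have hstep1 : ∀ δ ∈ S, ⟪ρS, δ⟫ ≤ ⟪ρ, δ⟫ := by
    refine pos_induction Δμ v (fun δ => ⟪ρS, δ⟫ ≤ ⟪ρ, δ⟫) ?_ ?_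
    · intro δ hδ hsimp
      have h1 : ⟪ρS, δ⟫ = ⟪δ, δ⟫ / 2 :=
        rho_simple Δμ v hΔμ0 hΔμred hΔμrefl hΔμcrys hvμ hδ hsimp
      have h2 := rho_ge Δ v hΔ0 hΔred hΔrefl hΔcrys hv (hSsub δ hδ)
      rw [← hρ] at h2
      linarith
    · intro δ hδ β hβ γ hγ heq hb hg
      rw [heq, inner_add_right, inner_add_right]
      linarith
  -- the μ-component of ρS vanishes
  have hμ0 : ⟪μ, ρS⟫ = 0 := by
    rw [hinner_ρS]
    have hz : ∀ δ ∈ S, ⟪μ, δ⟫ = 0 := by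
      intro δ hδ
      have h := (mem_filter.1 (mem_filter.1 hδ).1).2
      rw [real_inner_comm]
      exact h
    rw [Finset.sum_congr rfl hz]
    simp
  have e1 : ⟪lam - μ, ρS⟫ = ⟪lam, ρS⟫ := by
    rw [inner_sub_left, hμ0, sub_zero]
  -- Step 2 : ‖ρS‖² ≤ ⟪lam - μ, ρS⟫
  have hstep2 : ‖ρS‖ ^ 2 ≤ ⟪lam - μ, ρS⟫ := by
    have t1 : 0 ≤ ⟪lam - ρ, ρS⟫ := by
      rw [hinner_ρS]
      refine mul_nonneg (by norm_num) (Finset.sum_nonneg ?_)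
      intro δ hδ
      exact hlam δ (hSsub δ hδ)
    have t2 : 0 ≤ ⟪ρ - ρS, ρS⟫ := by
      rw [hinner_ρS]
      refine mul_nonneg (by norm_num) (Finset.sum_nonneg ?_)
      intro δ hδ
      rw [inner_sub_left]
      have := hstep1 δ hδ
      linarith
    have t3 : ⟪ρS, ρS⟫ = ‖ρS‖ ^ 2 := real_inner_self_eq_norm_sq ρS
    have e2 : ⟪lam, ρS⟫ = ⟪lam - ρ, ρS⟫ + ⟪ρ - ρS, ρS⟫ + ⟪ρS, ρS⟫ := by
      rw [inner_sub_left, inner_sub_left]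
      ring
    rw [e1, e2, t3]
    linarith
  -- conclusion
  rw [ge_iff_le, ← hSeq]
  have hgoal_eq : (2 : ℝ)⁻¹ * ∑ α ∈ S, ⟪lam, α⟫ = ⟪lam - μ, ρS⟫ := by
    rw [e1, hinner_ρS]
  rw [hgoal_eq]
  have hcs := real_inner_le_norm (lam - μ) ρS
  nlinarith [hstep2, hcs, norm_nonneg (lam - μ), norm_nonneg ρS,
    sq_nonneg (‖lam - μ‖ - ‖ρS‖)]
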